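/- Let n ≥ 2 and let γ be a tame natural d-path in [0,1]^n passing at time t_0 through a vertex v = (ε_1,…,ε_n) ∈ {0,1}^n with v ∉ {(0,…,0),(1,…,1)}. Let J = {j : ε_j = 0}. Then for all t ∈ [0,t_0] and all j ∈ J, γ_j(t) = 0, and for all t ∈ [t_0,n] and all i ∉ J, γ_i(t) = 1. Consequently γ restricted to [0,t_0] is a tame natural d-path of the subcube spanned by the coordinates not in J, and γ restricted to [t_0,n] (reparametrized to start at 0) is a tame natural d-path of the subcube spanned by the coordinates in J. -/
import Mathlib


open Set

/-- A tame natural d-path of the topological `n`-cube `[0,1]^n`: a continuous map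
`γ : [0,n] → [0,1]^n`, nondecreasing in each coordinate, whose endpoints are
vertices, and such that the sum of the coordinates of `γ t` equals `t`. -/
def IsNatPath (n : ℕ) (γ : ℝ → Fin n → ℝ) : Prop :=
  ContinuousOn γ (Icc 0 n) ∧
  (∀ t ∈ Icc (0:ℝ) n, ∀ i, γ t i ∈ Icc (0:ℝ) 1) ∧
  (∀ s ∈ Icc (0:ℝ) n, ∀ t ∈ Icc (0:ℝ) n, s ≤ t → ∀ i, γ s i ≤ γ t i) ∧
  (∀ i, γ 0 i = 0 ∨ γ 0 i = 1) ∧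
  (∀ i, γ (n:ℝ) i = 0 ∨ γ (n:ℝ) i = 1) ∧
  (∀ t ∈ Icc (0:ℝ) n, ∑ i, γ t i = t)

/-- A tame natural d-path in [0,1]^n (n ≥ 2) through an intermediate vertex
v = (ε₁,…,εₙ) at time t₀ splits: before t₀ the coordinates in J = {j : εⱼ = 0}
stay at 0 and the restriction to [0,t₀] is a tame natural d-path of the subcube
spanned by the coordinates not in J (naturality: the sum over i ∉ J of γᵢ(t) is t);
after t₀ the coordinates not in J stay at 1 and the (reparametrized) restriction
to [t₀,n] is a tame natural d-path of the subcube spanned by J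
(naturality: the sum over j ∈ J of γⱼ(t) is t − t₀). -/
theorem natPath_through_vertex_splits (n : ℕ) (hn : 2 ≤ n) (γ : ℝ → Fin n → ℝ)
    (hγ : IsNatPath n γ) (t₀ : ℝ) (ht₀ : t₀ ∈ Icc (0:ℝ) n) (v : Fin n → Bool)
    (hv : ∀ i, γ t₀ i = if v i then 1 else 0)
    (hv0 : v ≠ fun _ => false) (hv1 : v ≠ fun _ => true) :
    (∀ t ∈ Icc (0:ℝ) t₀, ∀ j, v j = false → γ t j = 0) ∧
    (∀ t ∈ Icc t₀ (n:ℝ), ∀ i, v i = true → γ t i = 1) ∧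
    (∀ t ∈ Icc (0:ℝ) t₀, ∑ i ∈ Finset.univ.filter (fun i => v i = true), γ t i = t) ∧
    (∀ t ∈ Icc t₀ (n:ℝ), ∑ j ∈ Finset.univ.filter (fun j => v j = false), γ t j = t - t₀) := by
  obtain ⟨hcont, hbox, hmono, h0, h1, hsum⟩ := hγ
  obtain ⟨ht₀0, ht₀n⟩ := ht₀
  have hmem : ∀ t ∈ Icc (0:ℝ) t₀, t ∈ Icc (0:ℝ) n := fun t ht => ⟨ht.1, ht.2.trans ht₀n⟩
  have hmem' : ∀ t ∈ Icc t₀ (n:ℝ), t ∈ Icc (0:ℝ) n := fun t ht => ⟨ht₀0.trans ht.1, ht.2⟩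
  have ht₀m : t₀ ∈ Icc (0:ℝ) n := ⟨ht₀0, ht₀n⟩
  have hzero : ∀ t ∈ Icc (0:ℝ) t₀, ∀ j, v j = false → γ t j = 0 := by
    intro t ht j hj
    have h1 := hmono t (hmem t ht) t₀ ht₀m ht.2 j
    rw [hv j, hj] at h1
    simp at h1
    have h2 := (hbox t (hmem t ht) j).1
    linarith
  have hone : ∀ t ∈ Icc t₀ (n:ℝ), ∀ i, v i = true → γ t i = 1 := by
    intro t ht i hi
    have h1 := hmono t₀ ht₀m t (hmem' t ht) ht.1 i
    rw [hv i, hi] at h1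
    simp at h1
    have h2 := (hbox t (hmem' t ht) i).2
    linarith
  refine ⟨hzero, hone, ?_, ?_⟩
  · intro t ht
    have hs := hsum t (hmem t ht)
    rw [← Finset.sum_filter_add_sum_filter_not Finset.univ (fun i => v i = true)] at hs
    have : ∑ i ∈ Finset.univ.filter (fun i => ¬ v i = true), γ t i = 0 := by
      apply Finset.sum_eq_zero
      intro i hi
      simp only [Finset.mem_filter, Bool.not_eq_true] at hi
      exact hzero t ht i hi.2
    linarith
  · intro t ht
    have hs := hsum t (hmem' t ht)
    have hst₀ := hsum t₀ ht₀m
    rw [← Finset.sum_filter_add_sum_filter_not Finset.univ (fun i => v i = true)] at hs hst₀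
    have hA : ∑ i ∈ Finset.univ.filter (fun i => v i = true), γ t i
        = ∑ i ∈ Finset.univ.filter (fun i => v i = true), γ t₀ i := by
      apply Finset.sum_congr rfl
      intro i hi
      simp only [Finset.mem_filter] at hi
      rw [hone t ht i hi.2, hv i, hi.2]; simp
    have hB : ∑ i ∈ Finset.univ.filter (fun i => ¬ v i = true), γ t₀ i = 0 := by
      apply Finset.sum_eq_zero
      intro i hi
      simp only [Finset.mem_filter, Bool.not_eq_true] at hi
      rw [hv i, hi.2]; simp
    have hconv : (Finset.univ.filter fun j => v j = false)
        = Finset.univ.filter (fun i => ¬ v i = true) := by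
      apply Finset.filter_congr; intro i _; simp
    rw [hconv]
    linarith
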